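/- Let M be a divisibility monoid. Any two irreducible elements x, y of M that admit local deltas satisfy either Δ_R(x) = Δ_R(y) or Δ_R(x) ∧ Δ_R(y) = 1, where ∧ denotes the left gcd. -/

import Mathlib

/-- `LDvd b a` : `b` left-divides `a`, i.e. `a = b * d` for some `d`. -/
def LDvd {M : Type*} [Monoid M] (b a : M) : Prop := ∃ d, a = b * d

/-- `c` is a right lcm of `a` and `b`. -/
def IsRightLcm {M : Type*} [Monoid M] (a b c : M) : Prop :=
  LDvd a c ∧ LDvd b c ∧ ∀ m, LDvd a m → LDvd b m → LDvd c m

/-- `1` is the only invertible element. -/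
def Conical (M : Type*) [Monoid M] : Prop := ∀ u : M, IsUnit u → u = 1

/-- Left and right cancellativity. -/
def Cancellative (M : Type*) [Monoid M] : Prop :=
  (∀ a b c : M, a * b = a * c → b = c) ∧ (∀ a b c : M, b * a = c * a → b = c)

/-- `IsRes a b r` : `r` is the residue `a \ b`, i.e. `a * r` is the right lcm `a ∨ b`. -/
def IsRes {M : Type*} [Monoid M] (a b r : M) : Prop := IsRightLcm a b (a * r)

/-- The set of irreducible elements of `M`. -/
def Irr (M : Type*) [Monoid M] : Set M :=
  {a | a ≠ 1 ∧ ∀ b c : M, a = b * c → b = 1 ∨ c = 1}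

/-- `a` is quasi-central: `aΣ = Σa` where `Σ` is the set of irreducible elements. -/
def QuasiCentral {M : Type*} [Monoid M] (a : M) : Prop :=
  (fun x => a * x) '' Irr M = (fun x => x * a) '' Irr M

/-- `g` is a left gcd of `a` and `b`. -/
def IsLeftGcd {M : Type*} [Monoid M] (a b g : M) : Prop :=
  LDvd g a ∧ LDvd g b ∧ ∀ d, LDvd d a → LDvd d b → LDvd d g

/-- `j` is the join of `x` and `y` inside the lattice `↓(a)` of left divisors of `a`. -/
def IsJoinIn {M : Type*} [Monoid M] (a x y j : M) : Prop :=
  LDvd j a ∧ LDvd x j ∧ LDvd y j ∧ ∀ m, LDvd m a → LDvd x m → LDvd y m → LDvd j m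

/-- A (left) divisibility monoid : cancellative, finitely generated by its irreducible
elements, any two elements admit a left gcd, and every `↓(a)` is a finite distributive
lattice under left divisibility (meets are left gcds, joins exist, distributivity holds). -/
structure IsDivisibilityMonoid (M : Type*) [Monoid M] : Prop where
  mul_left_cancel : ∀ a b c : M, a * b = a * c → b = c
  mul_right_cancel : ∀ a b c : M, b * a = c * a → b = c
  irr_finite : (Irr M).Finite
  irr_gen : ∀ a : M, a ∈ Submonoid.closure (Irr M)
  exists_gcd : ∀ a b : M, ∃ g, IsLeftGcd a b g
  divisors_finite : ∀ a : M, {b : M | LDvd b a}.Finite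
  exists_join : ∀ a x y : M, LDvd x a → LDvd y a → ∃ j, IsJoinIn a x y j
  distrib : ∀ a x y z : M, LDvd x a → LDvd y a → LDvd z a →
    ∀ jyz g gxy gxz j', IsJoinIn a y z jyz → IsLeftGcd x jyz g →
      IsLeftGcd x y gxy → IsLeftGcd x z gxz → IsJoinIn a gxy gxz j' → g = j'

/-- `d` is the (right) local delta of `a`: the right lcm of the set `{b \ a : b ∈ M}`,
all of whose elements are required to exist. -/
def IsLocalDelta {M : Type*} [Monoid M] (a d : M) : Prop :=
  (∀ b : M, ∃ r, IsRes b a r) ∧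
  (∀ b r : M, IsRes b a r → LDvd r d) ∧
  ∀ m : M, (∀ b r : M, IsRes b a r → LDvd r m) → LDvd d m

set_option linter.unusedSectionVars false
namespace DMproof

variable {M : Type*} [Monoid M]

theorem ldvd_refl (a : M) : LDvd a a := ⟨1, (mul_one a).symm⟩

theorem one_ldvd (a : M) : LDvd 1 a := ⟨a, (one_mul a).symm⟩

theorem ldvd_mul_right (a b : M) : LDvd a (a * b) := ⟨b, rfl⟩

theorem ldvd_trans {a b c : M} (h1 : LDvd a b) (h2 : LDvd b c) : LDvd a c := by
  obtain ⟨d, rfl⟩ := h1; obtain ⟨e, rfl⟩ := h2; exact ⟨d * e, mul_assoc a d e⟩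

theorem ldvd_mul_left {a b : M} (c : M) (h : LDvd a b) : LDvd (c * a) (c * b) := by
  obtain ⟨d, rfl⟩ := h; exact ⟨d, (mul_assoc c a d).symm⟩

section hM

variable (hM : IsDivisibilityMonoid M)
include hM

theorem lcancel {a b c : M} (h : a * b = a * c) : b = c := hM.mul_left_cancel a b c h

theorem rcancel {a b c : M} (h : b * a = c * a) : b = c := hM.mul_right_cancel a b c h

theorem ldvd_of_mul_ldvd {a b c : M} (h : LDvd (c * a) (c * b)) : LDvd a b := by
  obtain ⟨e, he⟩ := h
  exact ⟨e, lcancel hM (by rw [he, mul_assoc])⟩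

/-- Every right-invertible element is `1`. -/
theorem unit_one {u v : M} (h : u * v = 1) : u = 1 := by
  have hu1 : LDvd u 1 := ⟨v, h.symm⟩
  have hjyz : IsJoinIn (1 : M) 1 1 u := by
    refine ⟨hu1, one_ldvd u, one_ldvd u, ?_⟩
    intro m hm _ _
    exact ⟨v * m, by rw [← mul_assoc, h, one_mul]⟩
  have hg : IsLeftGcd (1 : M) u u := ⟨hu1, ldvd_refl u, fun d _ h2 => h2⟩
  have hgx : IsLeftGcd (1 : M) 1 1 := ⟨ldvd_refl 1, ldvd_refl 1, fun d hd _ => hd⟩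
  have hj' : IsJoinIn (1 : M) 1 1 1 :=
    ⟨ldvd_refl 1, ldvd_refl 1, ldvd_refl 1, fun m _ _ _ => one_ldvd m⟩
  exact hM.distrib 1 1 1 1 (ldvd_refl 1) (ldvd_refl 1) (ldvd_refl 1)
    u u 1 1 1 hjyz hg hgx hgx hj'

theorem eq_one_of_ldvd_one {a : M} (h : LDvd a 1) : a = 1 := by
  obtain ⟨e, he⟩ := h; exact unit_one hM he.symm

theorem ldvd_antisymm {a b : M} (h1 : LDvd a b) (h2 : LDvd b a) : a = b := by
  obtain ⟨d, hd⟩ := h1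
  obtain ⟨e, he⟩ := h2
  have h3 : a * 1 = a * (d * e) := by rw [mul_one, ← mul_assoc, ← hd, ← he]
  have hde : d = 1 := unit_one hM (lcancel hM h3).symm
  rw [hd, hde, mul_one]

theorem lcm_unique {a b c c' : M} (h1 : IsRightLcm a b c) (h2 : IsRightLcm a b c') : c = c' :=
  ldvd_antisymm hM (h1.2.2 c' h2.1 h2.2.1) (h2.2.2 c h1.1 h1.2.1)

theorem lcm_comm {a b c : M} (h : IsRightLcm a b c) : IsRightLcm b a c :=
  ⟨h.2.1, h.1, fun m h1 h2 => h.2.2 m h2 h1⟩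

theorem res_unique {b a r r' : M} (h1 : IsRes b a r) (h2 : IsRes b a r') : r = r' :=
  lcancel hM (lcm_unique hM h1 h2)

theorem res_one_left (a : M) : IsRes 1 a a := by
  refine ⟨one_ldvd _, ⟨1, by rw [one_mul, mul_one]⟩, ?_⟩
  intro m _ ha
  rw [one_mul]; exact ha

theorem res_one_right (c : M) : IsRes c 1 1 :=
  ⟨⟨1, rfl⟩, one_ldvd _, fun m hc _ => by rw [mul_one]; exact hc⟩

theorem res_self (a : M) : IsRes a a 1 :=
  ⟨⟨1, rfl⟩, ⟨1, rfl⟩, fun m ha _ => by rw [mul_one]; exact ha⟩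

theorem res_of_one_arg {c w : M} (h : IsRes c 1 w) : w = 1 :=
  res_unique hM h (res_one_right hM c)

theorem res_of_id_arg {a w : M} (h : IsRes 1 a w) : w = a :=
  res_unique hM h (res_one_left hM a)

/-- If `a ∣ c` then the residue of `a` by `c` is `1`. -/
theorem res_eq_one_of_ldvd {a c t : M} (h : LDvd a c) (ht : IsRes c a t) : t = 1 := by
  have h2 : IsRes c a 1 := ⟨⟨1, rfl⟩, by rw [mul_one]; exact h,
    fun m hm _ => by rw [mul_one]; exact hm⟩
  exact res_unique hM ht h2

theorem ldvd_of_res_one {a c : M} (h : IsRes c a 1) : LDvd a c := by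
  have := h.2.1; rwa [mul_one] at this

theorem res_mul {b c a r s : M} (h1 : IsRes b a r) (h2 : IsRes c r s) :
    IsRes (b * c) a s := by
  constructor
  · exact ldvd_mul_right _ _
  constructor
  · -- a ∣ b*c*s
    have har : LDvd a (b * r) := h1.2.1
    have hrc : LDvd r (c * s) := h2.2.1
    have : LDvd (b * r) (b * (c * s)) := ldvd_mul_left b hrc
    have := ldvd_trans har this
    rwa [← mul_assoc] at this
  · intro m hbc ham
    obtain ⟨e, he⟩ := hbc
    have hbm : LDvd b m := ⟨c * e, by rw [he, mul_assoc]⟩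
    have hbrm : LDvd (b * r) m := h1.2.2 m hbm ham
    -- m = b * (c*e)
    have hrm : LDvd r (c * e) := by
      apply ldvd_of_mul_ldvd hM (c := b)
      rw [← mul_assoc, ← he]; exact hbrm
    have hcm : LDvd c (c * e) := ldvd_mul_right _ _
    have hcs : LDvd (c * s) (c * e) := h2.2.2 _ hcm hrm
    have : LDvd (b * (c * s)) (b * (c * e)) := ldvd_mul_left b hcs
    rw [← mul_assoc, ← mul_assoc, ← he] at this
    exact this

theorem res_factor {b c a r t : M} (h1 : IsRes b a r) (h2 : IsRes (b * c) a t) :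
    IsRes c r t := by
  constructor
  · exact ldvd_mul_right _ _
  constructor
  · -- r ∣ c * t
    apply ldvd_of_mul_ldvd hM (c := b)
    have : LDvd (b * r) (b * c * t) :=
      h1.2.2 _ ⟨c * t, by rw [mul_assoc]⟩ h2.2.1
    rwa [mul_assoc] at this
  · intro m hcm hrm
    apply ldvd_of_mul_ldvd hM (c := b)
    have hbc : LDvd (b * c) (b * m) := ldvd_mul_left b hcm
    have har : LDvd a (b * m) := ldvd_trans h1.2.1 (ldvd_mul_left b hrm)
    have := h2.2.2 _ hbc har
    rwa [mul_assoc] at this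

theorem allres_of_res {a b r : M} (hall : ∀ c, ∃ t, IsRes c a t) (h : IsRes b a r) :
    ∀ c, ∃ t, IsRes c r t := by
  intro c
  obtain ⟨t, ht⟩ := hall (b * c)
  exact ⟨t, res_factor hM h ht⟩

theorem res_join {c a b r s j w : M} (hra : IsRes c a r) (hrb : IsRes c b s)
    (hj : IsRightLcm a b j) (hw : IsRightLcm r s w) : IsRes c j w := by
  constructor
  · exact ldvd_mul_right _ _
  constructor
  · refine hj.2.2 _ ?_ ?_
    · exact ldvd_trans hra.2.1 (ldvd_mul_left c hw.1)
    · exact ldvd_trans hrb.2.1 (ldvd_mul_left c hw.2.1)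
  · intro m hcm hjm
    obtain ⟨e, rfl⟩ := hcm
    have ham : LDvd a (c * e) := ldvd_trans hj.1 hjm
    have hbm : LDvd b (c * e) := ldvd_trans hj.2.1 hjm
    have hr : LDvd r e := ldvd_of_mul_ldvd hM (hra.2.2 _ (ldvd_mul_right _ _) ham)
    have hs : LDvd s e := ldvd_of_mul_ldvd hM (hrb.2.2 _ (ldvd_mul_right _ _) hbm)
    exact ldvd_mul_left c (hw.2.2 _ hr hs)

theorem res_mono {c s t D E : M} (h1 : IsRes c s t) (h2 : IsRes c D E) (h3 : LDvd s D) :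
    LDvd t E := by
  apply ldvd_of_mul_ldvd hM (c := c)
  exact h1.2.2 _ (ldvd_mul_right _ _) (ldvd_trans h3 h2.2.1)

theorem dvd_irr {z d : M} (hz : z ∈ Irr M) (h : LDvd d z) : d = 1 ∨ d = z := by
  obtain ⟨e, he⟩ := h
  rcases hz.2 d e he with h1 | h1
  · exact Or.inl h1
  · right; rw [he, h1, mul_one]

theorem irr_ne_one {z : M} (hz : z ∈ Irr M) : z ≠ 1 := hz.1

theorem lcm_exists {a b A : M} (haA : LDvd a A) (hbA : LDvd b A) :
    ∃ j, IsRightLcm a b j ∧ LDvd j A := by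
  obtain ⟨j, hjA, haj, hbj, hmin⟩ := hM.exists_join A a b haA hbA
  refine ⟨j, ⟨haj, hbj, ?_⟩, hjA⟩
  intro m ham hbm
  obtain ⟨g, hgj, hgm, hgmax⟩ := hM.exists_gcd j m
  have hag : LDvd a g := hgmax a haj ham
  have hbg : LDvd b g := hgmax b hbj hbm
  exact ldvd_trans (hmin g (ldvd_trans hgj hjA) hag hbg) hgm

theorem joinIn_of_lcm {a b j A : M} (h : IsRightLcm a b j) (hjA : LDvd j A) :
    IsJoinIn A a b j :=
  ⟨hjA, h.1, h.2.1, fun m _ ham hbm => h.2.2 m ham hbm⟩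

/-- An irreducible dividing a binary right lcm divides one of the two factors. -/
theorem atom_ldvd_lcm {z a b j : M} (hz : z ∈ Irr M) (hj : IsRightLcm a b j)
    (h : LDvd z j) : LDvd z a ∨ LDvd z b := by
  obtain ⟨g1, hg1⟩ := hM.exists_gcd z a
  obtain ⟨g2, hg2⟩ := hM.exists_gcd z b
  rcases dvd_irr hM hz hg1.1 with e1 | e1
  · rcases dvd_irr hM hz hg2.1 with e2 | e2
    · exfalso
      rw [e1] at hg1
      rw [e2] at hg2
      have hgz : IsLeftGcd z j z := ⟨ldvd_refl z, h, fun d hd _ => hd⟩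
      have hj' : IsJoinIn j 1 1 1 :=
        ⟨one_ldvd j, ldvd_refl 1, ldvd_refl 1, fun m _ _ _ => one_ldvd m⟩
      exact hz.1 (hM.distrib j z a b h hj.1 hj.2.1 j z 1 1 1
        (joinIn_of_lcm hM hj (ldvd_refl j)) hgz hg1 hg2 hj')
    · right; rw [← e2]; exact hg2.2.1
  · left; rw [← e1]; exact hg1.2.1

/-- Residues of irreducibles are `1` or irreducible. -/
theorem res_irr {x b r : M} (hx : x ∈ Irr M) (h : IsRes b x r) : r = 1 ∨ r ∈ Irr M := by
  by_cases hr1 : r = 1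
  · exact Or.inl hr1
  right
  refine ⟨hr1, ?_⟩
  intro r1 r2 hr
  by_contra hcon
  push_neg at hcon
  obtain ⟨h1, h2⟩ := hcon
  subst hr
  set T := b * (r1 * r2) with hT
  have hmT : LDvd (b * r1) T := ⟨r2, by rw [hT, mul_assoc]⟩
  have hmne : b * r1 ≠ T := by
    intro hco
    apply h2
    have h5 : (b * r1) * r2 = (b * r1) * 1 := by
      rw [mul_one, mul_assoc, ← hT, hco]
    exact lcancel hM h5
  have hmnb : b * r1 ≠ b := by
    intro hco
    apply h1
    have h5 : b * r1 = b * 1 := by rw [mul_one, hco]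
    exact lcancel hM h5
  have hbT : LDvd b T := ldvd_mul_right _ _
  have hxT : LDvd x T := h.2.1
  have hjyz : IsJoinIn T b x T := joinIn_of_lcm hM h (ldvd_refl T)
  have hgm : IsLeftGcd (b * r1) T (b * r1) := ⟨ldvd_refl _, hmT, fun d hd _ => hd⟩
  have hgb : IsLeftGcd (b * r1) b b := ⟨ldvd_mul_right _ _, ldvd_refl b, fun d _ hd => hd⟩
  obtain ⟨g3, hg3⟩ := hM.exists_gcd (b * r1) x
  rcases dvd_irr hM hx hg3.2.1 with e3 | e3
  · rw [e3] at hg3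
    have hj' : IsJoinIn T b 1 b :=
      ⟨hbT, ldvd_refl b, one_ldvd b, fun m _ hbm _ => hbm⟩
    exact hmnb (hM.distrib T (b * r1) b x hmT hbT hxT T (b * r1) b 1 b hjyz hgm hgb hg3 hj')
  · rw [e3] at hg3
    have hj' : IsJoinIn T b x T := hjyz
    exact hmne (hM.distrib T (b * r1) b x hmT hbT hxT T (b * r1) b x T hjyz hgm hgb hg3 hj')

/-- Injectivity of residuation on irreducibles: two distinct irreducibles cannot have
the same nontrivial residue by the same element. -/
theorem res_inj {a a' c t : M} (ha : a ∈ Irr M) (ha' : a' ∈ Irr M) (hne : a ≠ a')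
    (h1 : IsRes c a t) (h2 : IsRes c a' t) (ht : t ≠ 1) : False := by
  have hact : LDvd a (c * t) := h1.2.1
  have ha'ct : LDvd a' (c * t) := h2.2.1
  obtain ⟨P, hP, hPct⟩ := lcm_exists hM hact ha'ct
  -- any common divisor of P and c is 1
  have hnotac : ¬ LDvd a c := fun hac => ht (res_eq_one_of_ldvd hM hac h1)
  have hnota'c : ¬ LDvd a' c := fun hac => ht (res_eq_one_of_ldvd hM hac h2)
  have hgcd1 : ∀ d, LDvd d P → LDvd d c → LDvd d 1 := by
    intro d hdP hdc
    have hgxy : IsLeftGcd d a 1 := by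
      refine ⟨one_ldvd d, one_ldvd a, ?_⟩
      intro e hed hea
      rcases dvd_irr hM ha hea with rfl | rfl
      · exact ldvd_refl 1
      · exact absurd (ldvd_trans hed hdc) hnotac
    have hgxz : IsLeftGcd d a' 1 := by
      refine ⟨one_ldvd d, one_ldvd a', ?_⟩
      intro e hed hea
      rcases dvd_irr hM ha' hea with rfl | rfl
      · exact ldvd_refl 1
      · exact absurd (ldvd_trans hed hdc) hnota'c
    have hgd : IsLeftGcd d P d := ⟨ldvd_refl d, hdP, fun e he _ => he⟩
    have hj' : IsJoinIn P 1 1 1 :=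
      ⟨one_ldvd P, ldvd_refl 1, ldvd_refl 1, fun m _ _ _ => one_ldvd m⟩
    have := hM.distrib P d a a' hdP hP.1 hP.2.1 P d 1 1 1
      (joinIn_of_lcm hM hP (ldvd_refl P)) hgd hgxy hgxz hj'
    rw [this]; exact ldvd_refl 1
  -- now distributivity in the frame c*t : P = a
  have hgP1 : IsLeftGcd P c 1 := ⟨one_ldvd P, one_ldvd c, hgcd1⟩
  have hgPa : IsLeftGcd P a a := ⟨hP.1, ldvd_refl a, fun d _ hd => hd⟩
  have hgPP : IsLeftGcd P (c * t) P := ⟨ldvd_refl P, hPct, fun d hd _ => hd⟩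
  have hjyz : IsJoinIn (c * t) c a (c * t) := joinIn_of_lcm hM h1 (ldvd_refl _)
  have hj' : IsJoinIn (c * t) 1 a a :=
    ⟨hact, one_ldvd a, ldvd_refl a, fun m _ _ ham => ham⟩
  have hPa : P = a := hM.distrib (c * t) P c a hPct (ldvd_mul_right _ _) hact
    (c * t) P 1 a a hjyz hgPP hgP1 hgPa hj'
  rcases dvd_irr hM ha (hPa ▸ hP.2.1) with e | e
  · exact ha'.1 e
  · exact hne e.symm

/-- `D` is the right lcm of the finite set `s`. -/
def FinLcm (s : Finset M) (D : M) : Prop :=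
  (∀ r ∈ s, LDvd r D) ∧ ∀ m, (∀ r ∈ s, LDvd r m) → LDvd D m

theorem finlcm_exists (s : Finset M) (A : M) (hs : ∀ r ∈ s, LDvd r A) :
    ∃ D, FinLcm s D ∧ LDvd D A := by
  classical
  induction s using Finset.induction_on with
  | empty => exact ⟨1, ⟨by simp, fun m _ => one_ldvd m⟩, one_ldvd A⟩
  | @insert a s ha IH =>
    obtain ⟨D0, hD0, hD0A⟩ := IH (fun r hr => hs r (Finset.mem_insert_of_mem hr))
    obtain ⟨j, hj, hjA⟩ := lcm_exists hM (hs a (Finset.mem_insert_self a s)) hD0A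
    refine ⟨j, ⟨?_, ?_⟩, hjA⟩
    · intro r hr
      rcases Finset.mem_insert.mp hr with rfl | hr
      · exact hj.1
      · exact ldvd_trans (hD0.1 r hr) hj.2.1
    · intro m hm
      exact hj.2.2 m (hm a (Finset.mem_insert_self a s))
        (hD0.2 m (fun r hr => hm r (Finset.mem_insert_of_mem hr)))

theorem finlcm_unique {s : Finset M} {D D' : M} (h1 : FinLcm s D) (h2 : FinLcm s D') :
    D = D' :=
  ldvd_antisymm hM (h1.2 D' h2.1) (h2.2 D h1.1)

theorem atom_le_finlcm {z : M} (hz : z ∈ Irr M) (s : Finset M) (D : M)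
    (hD : FinLcm s D) (h : LDvd z D) : ∃ r ∈ s, LDvd z r := by
  classical
  induction s using Finset.induction_on generalizing D with
  | empty =>
    exfalso
    have hD1 : LDvd D 1 := hD.2 1 (by simp)
    exact hz.1 (eq_one_of_ldvd_one hM (ldvd_trans h hD1))
  | @insert a s ha IH =>
    have hsub : ∀ r ∈ s, LDvd r D := fun r hr => hD.1 r (Finset.mem_insert_of_mem hr)
    obtain ⟨D0, hD0, hD0D⟩ := finlcm_exists hM s D hsub
    obtain ⟨j, hj, hjD⟩ := lcm_exists hM (hD.1 a (Finset.mem_insert_self a s)) hD0D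
    have hDj : D = j := by
      apply ldvd_antisymm hM _ hjD
      apply hD.2
      intro r hr
      rcases Finset.mem_insert.mp hr with rfl | hr
      · exact hj.1
      · exact ldvd_trans (hD0.1 r hr) hj.2.1
    rcases atom_ldvd_lcm hM hz hj (hDj ▸ h) with h1 | h1
    · exact ⟨a, Finset.mem_insert_self a s, h1⟩
    · obtain ⟨r, hr, hzr⟩ := IH D0 hD0 h1
      exact ⟨r, Finset.mem_insert_of_mem hr, hzr⟩

theorem res_finlcm (c B : M) (s : Finset M) : ∀ D, FinLcm s D →
    (∀ r ∈ s, ∃ t, IsRes c r t) →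
    (∀ r ∈ s, ∀ t, IsRes c r t → LDvd t B) → LDvd D B →
    ∃ E, IsRes c D E ∧ (∀ r ∈ s, ∀ t, IsRes c r t → LDvd t E) ∧
      ∀ m, (∀ r ∈ s, ∀ t, IsRes c r t → LDvd t m) → LDvd E m := by
  classical
  induction s using Finset.induction_on with
  | empty =>
    intro D hD hres hbound hDB
    have hD1 : D = 1 := eq_one_of_ldvd_one hM (hD.2 1 (by simp))
    subst hD1
    exact ⟨1, res_one_right hM c, by simp, fun m _ => one_ldvd m⟩
  | @insert a s ha IH =>
    intro D hD hres hbound hDB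
    have hsub : ∀ r ∈ s, LDvd r D := fun r hr => hD.1 r (Finset.mem_insert_of_mem hr)
    obtain ⟨D0, hD0, hD0D⟩ := finlcm_exists hM s D hsub
    have hDlcm : IsRightLcm a D0 D := by
      refine ⟨hD.1 a (Finset.mem_insert_self a s), hD0D, ?_⟩
      intro m ham hD0m
      apply hD.2
      intro r hr
      rcases Finset.mem_insert.mp hr with rfl | hr
      · exact ham
      · exact ldvd_trans (hD0.1 r hr) hD0m
    obtain ⟨E0, hE0, hub0, hmin0⟩ := IH D0 hD0
      (fun r hr => hres r (Finset.mem_insert_of_mem hr))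
      (fun r hr t ht => hbound r (Finset.mem_insert_of_mem hr) t ht)
      (ldvd_trans hD0D hDB)
    obtain ⟨t0, ht0⟩ := hres a (Finset.mem_insert_self a s)
    have hE0B : LDvd E0 B :=
      hmin0 B (fun r hr t ht => hbound r (Finset.mem_insert_of_mem hr) t ht)
    have ht0B : LDvd t0 B := hbound a (Finset.mem_insert_self a s) t0 ht0
    obtain ⟨E, hElcm, _⟩ := lcm_exists hM ht0B hE0B
    refine ⟨E, res_join hM ht0 hE0 hDlcm hElcm, ?_, ?_⟩
    · intro r hr t ht
      rcases Finset.mem_insert.mp hr with rfl | hr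
      · rw [res_unique hM ht ht0]; exact hElcm.1
      · exact ldvd_trans (hub0 r hr t ht) hElcm.2.1
    · intro m hm
      exact hElcm.2.2 m (hm a (Finset.mem_insert_self a s) t0 ht0)
        (hmin0 m (fun r hr t ht => hm r (Finset.mem_insert_of_mem hr) t ht))

/-- context for the key combinatorial lemmas: a finite residuation-closed set of
irreducibles. -/
structure ClosedSys (F : Finset M) : Prop where
  atoms : ∀ s ∈ F, s ∈ Irr M
  closed : ∀ s ∈ F, ∀ c r, IsRes c s r → r = 1 ∨ r ∈ F
  res : ∀ s ∈ F, ∀ c, ∃ r, IsRes c s r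

theorem sys_bound {F : Finset M} (hF : ClosedSys F) {D : M} (hD : FinLcm F D)
    (c : M) : ∀ r ∈ F, ∀ t, IsRes c r t → LDvd t D := by
  intro r hr t ht
  rcases hF.closed r hr c t ht with rfl | h
  · exact one_ldvd D
  · exact hD.1 t h

/-- When the residuation by `c` has no kernel on `F`, it fixes the lcm of `F`. -/
theorem res_fullfix {F : Finset M} (hF : ClosedSys F) {D : M} (hD : FinLcm F D)
    (c : M) (hker : ∀ s ∈ F, ¬ LDvd s c) : IsRes c D D := by
  classical
  obtain ⟨E, hE, hub, hmin⟩ := res_finlcm hM c D F D hD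
    (fun r hr => hF.res r hr c) (sys_bound hM hF hD c) (ldvd_refl D)
  set f : M → M := fun r => if h : ∃ t, IsRes c r t then h.choose else 1 with hf
  have hfr : ∀ r ∈ F, IsRes c r (f r) := by
    intro r hr
    have h := hF.res r hr c
    simp only [hf, dif_pos h]
    exact h.choose_spec
  have hf1 : ∀ r ∈ F, f r ≠ 1 := by
    intro r hr h1
    exact hker r hr (ldvd_of_res_one hM (h1 ▸ hfr r hr))
  have hfF : ∀ r ∈ F, f r ∈ F := by
    intro r hr
    rcases hF.closed r hr c (f r) (hfr r hr) with h | h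
    · exact absurd h (hf1 r hr)
    · exact h
  have hinj : Set.InjOn f F := by
    intro r hr r' hr' heq
    by_contra hne
    exact res_inj hM (hF.atoms r hr) (hF.atoms r' hr') hne (hfr r hr)
      (heq ▸ hfr r' hr') (hf1 r hr)
  have hGF : F.image f ⊆ F := by
    intro t ht
    obtain ⟨r, hr, rfl⟩ := Finset.mem_image.mp ht
    exact hfF r hr
  have hGeq : F.image f = F := by
    apply Finset.eq_of_subset_of_card_le hGF
    rw [Finset.card_image_of_injOn hinj]
  have hDE : LDvd D E := by
    apply hD.2
    intro t ht
    rw [← hGeq] at ht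
    obtain ⟨r, hr, rfl⟩ := Finset.mem_image.mp ht
    exact hub r hr (f r) (hfr r hr)
  have hED : LDvd E D := hmin D (sys_bound hM hF hD c)
  have : E = D := ldvd_antisymm hM hED hDE
  exact this ▸ hE

/-- Key lemma: there is no residuation edge from outside a closed system into it. -/
theorem edge {F : Finset M} (hF : ClosedSys F) {D : M} (hD : FinLcm F D)
    {a γ a' : M} (ha : a ∈ Irr M) (haF : a ∉ F) (hares : ∀ c, ∃ r, IsRes c a r)
    (hγ : γ ∈ Irr M) (hstep : IsRes γ a a') (ha' : a' ∈ F) : False := by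
  classical
  have hone_notF : (1 : M) ∉ F := fun h => (hF.atoms 1 h).1 rfl
  have haD : ¬ LDvd a D := by
    intro h
    obtain ⟨r, hr, har⟩ := atom_le_finlcm hM ha F D hD h
    rcases dvd_irr hM (hF.atoms r hr) har with h1 | h1
    · exact ha.1 h1
    · exact haF (h1 ▸ hr)
  have hresaD : IsRes a D D := by
    apply res_fullfix hM hF hD a
    intro s hs hsa
    rcases dvd_irr hM ha hsa with rfl | rfl
    · exact hone_notF hs
    · exact haF hs
  -- the lcm of a and D is a * D
  by_cases hγF : γ ∈ F
  · -- γ inside the system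
    have hγD : LDvd γ D := hD.1 γ hγF
    obtain ⟨Eγ, hEγ, hubγ, hminγ⟩ := res_finlcm hM γ D F D hD
      (fun r hr => hF.res r hr γ) (sys_bound hM hF hD γ) (ldvd_refl D)
    have hEγD : LDvd Eγ D := hminγ D (sys_bound hM hF hD γ)
    have hDeq : γ * Eγ = D :=
      lcm_unique hM hEγ ⟨hγD, ldvd_refl D, fun m _ h => h⟩
    have hEγneD : Eγ ≠ D := by
      intro h
      rw [h] at hDeq
      apply hγ.1
      apply rcancel hM (a := D)
      rw [one_mul]
      exact hDeq
    -- residuation by γ on F \ {γ}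
    set f : M → M := fun r => if h : ∃ t, IsRes γ r t then h.choose else 1 with hf
    have hfr : ∀ r ∈ F, IsRes γ r (f r) := by
      intro r hr
      have h := hF.res r hr γ
      simp only [hf, dif_pos h]
      exact h.choose_spec
    have hf1 : ∀ r ∈ F, r ≠ γ → f r ≠ 1 := by
      intro r hr hrγ h1
      have := ldvd_of_res_one hM (h1 ▸ hfr r hr)
      rcases dvd_irr hM hγ this with h2 | h2
      · exact (hF.atoms r hr).1 h2
      · exact hrγ h2
    have hfF : ∀ r ∈ F, r ≠ γ → f r ∈ F := by
      intro r hr hrγ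
      rcases hF.closed r hr γ (f r) (hfr r hr) with h | h
      · exact absurd h (hf1 r hr hrγ)
      · exact h
    set H : Finset M := F.filter (fun s => LDvd s Eγ) with hH
    have hGH : (F.erase γ).image f ⊆ H := by
      intro t ht
      obtain ⟨r, hr, rfl⟩ := Finset.mem_image.mp ht
      have hrF := Finset.mem_of_mem_erase hr
      have hrγ := Finset.ne_of_mem_erase hr
      rw [hH, Finset.mem_filter]
      exact ⟨hfF r hrF hrγ, res_mono hM (hfr r hrF) hEγ (hD.1 r hrF)⟩
    have hinj : Set.InjOn f (F.erase γ) := by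
      intro r hr r' hr' heq
      by_contra hne
      exact res_inj hM (hF.atoms r (Finset.mem_of_mem_erase hr))
        (hF.atoms r' (Finset.mem_of_mem_erase hr')) hne
        (hfr r (Finset.mem_of_mem_erase hr)) (heq ▸ hfr r' (Finset.mem_of_mem_erase hr'))
        (hf1 r (Finset.mem_of_mem_erase hr) (Finset.ne_of_mem_erase hr))
    have hHcard : F.card - 1 ≤ H.card := by
      calc F.card - 1 = (F.erase γ).card := (Finset.card_erase_of_mem hγF).symm
        _ = ((F.erase γ).image f).card := (Finset.card_image_of_injOn hinj).symm
        _ ≤ H.card := Finset.card_le_card hGH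
    have hHF : H ⊆ F := Finset.filter_subset _ F
    have ha'H : a' ∉ H := by
      intro h
      have ha'Eγ : LDvd a' Eγ := (Finset.mem_filter.mp h).2
      apply haD
      have h1 : LDvd a (γ * a') := hstep.2.1
      have h2 : LDvd (γ * a') (γ * Eγ) := ldvd_mul_left γ ha'Eγ
      rw [hDeq] at h2
      exact ldvd_trans h1 h2
    have huniq : ∀ s ∈ F, s ∉ H → s = a' := by
      intro s hs hsH
      by_contra hne
      have hpair : ({s, a'} : Finset M) ⊆ F \ H := by
        intro t ht
        rcases Finset.mem_insert.mp ht with rfl | ht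
        · exact Finset.mem_sdiff.mpr ⟨hs, hsH⟩
        · rw [Finset.mem_singleton.mp ht]
          exact Finset.mem_sdiff.mpr ⟨ha', ha'H⟩
      have h2 : 2 ≤ (F \ H).card := by
        have := Finset.card_le_card hpair
        rwa [Finset.card_pair hne] at this
      have h3 : (F \ H).card + H.card = F.card := Finset.card_sdiff_add_card_eq_card hHF
      omega
    -- D is the lcm of a' and Eγ
    obtain ⟨Z, hZlcm, hZD⟩ := lcm_exists hM (hD.1 a' ha') hEγD
    have hDZ : LDvd D Z := by
      apply hD.2
      intro s hs
      by_cases hsH : s ∈ H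
      · exact ldvd_trans (Finset.mem_filter.mp hsH).2 hZlcm.2.1
      · rw [huniq s hs hsH]; exact hZlcm.1
    have hZeq : Z = D := ldvd_antisymm hM hZD hDZ
    rw [hZeq] at hZlcm
    -- final contradiction
    have hW : IsRes γ (a * D) D := res_join hM hstep hEγ hresaD hZlcm
    have hW2 : IsRightLcm γ (a * D) (a * D) :=
      ⟨ldvd_trans hγD hresaD.2.1, ldvd_refl _, fun m _ h => h⟩
    have : γ * D = a * D := lcm_unique hM hW hW2
    exact haF ((rcancel hM this) ▸ hγF)
  · -- γ outside the system
    obtain ⟨w3, hw3⟩ : LDvd a (γ * a') := hstep.2.1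
    have hw3res : IsRes a γ w3 := by
      have : IsRightLcm a γ (γ * a') := lcm_comm hM hstep
      rwa [hw3] at this
    have hw3ne1 : w3 ≠ 1 := by
      intro h
      rw [h, mul_one] at hw3
      rcases ha.2 γ a' hw3.symm with h1 | h1
      · exact hγ.1 h1
      · exact (hF.atoms a' ha').1 h1
    have hw3irr : w3 ∈ Irr M := (res_irr hM hγ hw3res).resolve_left hw3ne1
    have hγDD : IsRes γ D D := by
      apply res_fullfix hM hF hD γ
      intro s hs hsγ
      rcases dvd_irr hM hγ hsγ with rfl | rfl
      · exact hone_notF hs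
      · exact hγF hs
    have haγD : LDvd a (γ * D) :=
      ldvd_trans hstep.2.1 (ldvd_mul_left γ (hD.1 a' ha'))
    by_cases hw3D : LDvd w3 D
    · have hRJ : IsRes a (γ * D) D :=
        res_join hM hw3res hresaD hγDD ⟨hw3D, ldvd_refl D, fun m _ h => h⟩
      have hR2 : IsRightLcm a (γ * D) (γ * D) := ⟨haγD, ldvd_refl _, fun m _ h => h⟩
      have heq : a * D = γ * D := lcm_unique hM hRJ hR2
      have haγ : a = γ := rcancel hM heq
      subst haγ
      have : a' = 1 := res_unique hM hstep (res_self hM a)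
      exact (hF.atoms a' ha').1 this
    · have hw3F : w3 ∉ F := fun h => hw3D (hD.1 w3 h)
      have hw3DD : IsRes w3 D D := by
        apply res_fullfix hM hF hD w3
        intro s hs hsw
        rcases dvd_irr hM hw3irr hsw with rfl | rfl
        · exact hone_notF hs
        · exact hw3F hs
      have hRJ : IsRes a (γ * D) (w3 * D) :=
        res_join hM hw3res hresaD hγDD hw3DD
      have hR2 : IsRightLcm a (γ * D) (γ * D) := ⟨haγD, ldvd_refl _, fun m _ h => h⟩
      have heq : a * (w3 * D) = γ * D := lcm_unique hM hRJ hR2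
      rw [← mul_assoc] at heq
      have : a * w3 = γ := rcancel hM heq
      rcases hγ.2 a w3 this.symm with h1 | h1
      · exact ha.1 h1
      · exact hw3ne1 h1

/-- No residuation chain leads from outside a closed system into it. -/
theorem no_reach {F : Finset M} (hF : ClosedSys F) {D : M} (hD : FinLcm F D) (d : M) :
    ∀ a w, a ∈ Irr M → (∀ c, ∃ r, IsRes c a r) → a ∉ F → IsRes d a w →
      w = 1 ∨ (w ∈ Irr M ∧ (∀ c, ∃ r, IsRes c w r) ∧ w ∉ F) := by
  refine Submonoid.closure_induction (motive := fun d _ => ∀ a w, a ∈ Irr M →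
      (∀ c, ∃ r, IsRes c a r) → a ∉ F → IsRes d a w →
      w = 1 ∨ (w ∈ Irr M ∧ (∀ c, ∃ r, IsRes c w r) ∧ w ∉ F)) ?_ ?_ ?_ (hM.irr_gen d)
  · intro γ hγ a w ha hares haF hres
    by_cases hw1 : w = 1
    · exact Or.inl hw1
    right
    refine ⟨(res_irr hM ha hres).resolve_left hw1, allres_of_res hM hares hres, ?_⟩
    intro hwF
    exact edge hM hF hD ha haF hares hγ hres hwF
  · intro a w ha hares haF hres
    have hwa : w = a := res_of_id_arg hM hres
    subst hwa
    exact Or.inr ⟨ha, hares, haF⟩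
  · intro d1 d2 _ _ IH1 IH2 a w ha hares haF hres
    obtain ⟨r, hr⟩ := hares d1
    have h2 : IsRes d2 r w := res_factor hM hr hres
    rcases IH1 a r ha hares haF hr with rfl | ⟨hrI, hrres, hrF⟩
    · exact Or.inl (res_of_one_arg hM h2)
    · exact IH2 r w hrI hrres hrF h2

/-- Symmetry of the residuation reachability relation on irreducibles. -/
theorem symm_res {x dx : M} (hx : x ∈ Irr M) (hdx : IsLocalDelta x dx)
    {b z : M} (hz1 : z ≠ 1) (hbz : IsRes b x z) : ∃ c, IsRes c z x := by
  classical
  set V : Set M := {r | r ≠ 1 ∧ ∃ c, IsRes c z r} with hV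
  have hVsub : V ⊆ {m | LDvd m dx} := by
    rintro r ⟨hr1, c, hc⟩
    exact hdx.2.1 (b * c) r (res_mul hM hbz hc)
  have hVfin : V.Finite := (hM.divisors_finite dx).subset hVsub
  set F : Finset M := hVfin.toFinset with hFdef
  have hmemF : ∀ r, r ∈ F ↔ (r ≠ 1 ∧ ∃ c, IsRes c z r) := by
    intro r; rw [hFdef, Set.Finite.mem_toFinset]; rfl
  have hzIrr : z ∈ Irr M := (res_irr hM hx hbz).resolve_left hz1
  have hallz : ∀ c, ∃ r, IsRes c z r := allres_of_res hM hdx.1 hbz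
  have hF : ClosedSys F := by
    constructor
    · intro s hs
      obtain ⟨hs1, c, hc⟩ := (hmemF s).mp hs
      exact (res_irr hM hzIrr hc).resolve_left hs1
    · intro s hs c r hres
      obtain ⟨hs1, c0, hc0⟩ := (hmemF s).mp hs
      by_cases hr1 : r = 1
      · exact Or.inl hr1
      · exact Or.inr ((hmemF r).mpr ⟨hr1, c0 * c, res_mul hM hc0 hres⟩)
    · intro s hs c
      obtain ⟨hs1, c0, hc0⟩ := (hmemF s).mp hs
      exact allres_of_res hM hallz hc0 c
  obtain ⟨D, hD, _⟩ := finlcm_exists hM F dx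
    (fun r hr => hVsub ((hmemF r).mp hr : r ∈ V))
  by_cases hxF : x ∈ F
  · exact ((hmemF x).mp hxF).2
  · exfalso
    rcases no_reach hM hF hD b x z hx hdx.1 hxF hbz with h | ⟨_, _, hzF⟩
    · exact hz1 h
    · exact hzF ((hmemF z).mpr ⟨hz1, 1, res_one_left hM z⟩)

/-- An irreducible dividing the local delta of `x` is a residue of `x`. -/
theorem atom_mem_res {x dx : M} (hx : x ∈ Irr M) (hdx : IsLocalDelta x dx)
    {z : M} (hz : z ∈ Irr M) (hzdx : LDvd z dx) : ∃ b, IsRes b x z := by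
  classical
  set S : Set M := {r | ∃ b, IsRes b x r} with hS
  have hSsub : S ⊆ {m | LDvd m dx} := by
    rintro r ⟨b, hb⟩
    exact hdx.2.1 b r hb
  have hSfin : S.Finite := (hM.divisors_finite dx).subset hSsub
  set F : Finset M := hSfin.toFinset with hFdef
  have hmemF : ∀ r, r ∈ F ↔ ∃ b, IsRes b x r := by
    intro r; rw [hFdef, Set.Finite.mem_toFinset]; rfl
  have hFD : FinLcm F dx := by
    constructor
    · intro r hr
      obtain ⟨b, hb⟩ := (hmemF r).mp hr
      exact hdx.2.1 b r hb
    · intro m hm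
      exact hdx.2.2 m (fun b r hbr => hm r ((hmemF r).mpr ⟨b, hbr⟩))
  obtain ⟨r, hrF, hzr⟩ := atom_le_finlcm hM hz F dx hFD hzdx
  obtain ⟨b, hb⟩ := (hmemF r).mp hrF
  have hrI : r ∈ Irr M := by
    rcases res_irr hM hx hb with h | h
    · subst h
      exact absurd (eq_one_of_ldvd_one hM hzr) hz.1
    · exact h
  rcases dvd_irr hM hrI hzr with h1 | h1
  · exact absurd h1 hz.1
  · exact ⟨b, h1 ▸ hb⟩

theorem exists_irr_factor (d : M) : d = 1 ∨ ∃ z ∈ Irr M, ∃ e, d = z * e := by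
  refine Submonoid.closure_induction
    (motive := fun d _ => d = 1 ∨ ∃ z ∈ Irr M, ∃ e, d = z * e) ?_ ?_ ?_ (hM.irr_gen d)
  · intro z hz
    exact Or.inr ⟨z, hz, 1, (mul_one z).symm⟩
  · exact Or.inl rfl
  · intro d1 d2 _ _ IH1 IH2
    rcases IH1 with rfl | ⟨z, hz, e, rfl⟩
    · rcases IH2 with rfl | ⟨z, hz, e, rfl⟩
      · exact Or.inl (one_mul 1)
      · exact Or.inr ⟨z, hz, e, by rw [one_mul]⟩
    · exact Or.inr ⟨z, hz, e * d2, by rw [mul_assoc]⟩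

end hM
end DMproof

theorem stmt17 {M : Type*} [Monoid M] (hM : IsDivisibilityMonoid M)
    (x y dx dy : M) (hx : x ∈ Irr M) (hy : y ∈ Irr M)
    (hdx : IsLocalDelta x dx) (hdy : IsLocalDelta y dy) :
    dx = dy ∨ IsLeftGcd dx dy 1 := by
  classical
  open DMproof in
  by_cases hcom : ∃ z, z ∈ Irr M ∧ LDvd z dx ∧ LDvd z dy
  · left
    obtain ⟨z, hzI, hzdx, hzdy⟩ := hcom
    obtain ⟨bx, hbx⟩ := atom_mem_res hM hx hdx hzI hzdx
    obtain ⟨by', hby⟩ := atom_mem_res hM hy hdy hzI hzdy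
    obtain ⟨cx, hcx⟩ := symm_res hM hx hdx hzI.1 hbx
    obtain ⟨cy, hcy⟩ := symm_res hM hy hdy hzI.1 hby
    apply ldvd_antisymm hM
    · apply hdx.2.2
      intro b r hbr
      exact hdy.2.1 (by' * (cx * b)) r (res_mul hM hby (res_mul hM hcx hbr))
    · apply hdy.2.2
      intro b r hbr
      exact hdx.2.1 (bx * (cy * b)) r (res_mul hM hbx (res_mul hM hcy hbr))
  · right
    refine ⟨one_ldvd dx, one_ldvd dy, ?_⟩
    intro d hddx hddy
    rcases exists_irr_factor hM d with rfl | ⟨z, hz, e, rfl⟩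
    · exact ldvd_refl 1
    · exact absurd ⟨z, hz, ldvd_trans (ldvd_mul_right z e) hddx,
        ldvd_trans (ldvd_mul_right z e) hddy⟩ hcom
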